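/- For every natural number r ≥ 1, the Bell number B(2r) satisfies B(2r) = Σ_{l=0}^{r} l! · (Σ_{k=l}^{r} S(r,k) · C(k,l))², where S(r,k) denotes the Stirling number of the second kind and C(k,l) the binomial coefficient. (This expresses the dimension of the partition algebra P_r, which equals the number of set partitions of a 2r-element set, via its iterated inflation along the layers of fixed propagating number.) -/

import Mathlib

open Finset Function

section SetoidFinite

instance setoidFinite {γ : Type*} [Finite γ] : Finite (Setoid γ) :=
  Finite.of_injective (fun s => s.r)
    (fun s₁ s₂ h => Setoid.ext (fun a b => iff_of_eq (congrFun (congrFun h a) b)))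

end SetoidFinite

section E1

variable {α : Type*} [Fintype α] [DecidableEq α]

/-- `ofSetoid` with a classical decidability instance. -/
noncomputable def ofS (s : Setoid α) : Finpartition (univ : Finset α) :=
  letI := Classical.decRel s.r
  Finpartition.ofSetoid s

lemma mem_part_ofS_iff_rel {s : Setoid α} {a b : α} :
    b ∈ (ofS s).part a ↔ s a b := by
  letI := Classical.decRel s.r
  unfold ofS
  exact Finpartition.mem_part_ofSetoid_iff_rel

lemma parts_eq_image_part (P : Finpartition (univ : Finset α)) :
    P.parts = univ.image P.part := by
  ext p
  constructor
  · intro hp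
    obtain ⟨a, -, ha⟩ := P.part_surjOn hp
    exact mem_image.2 ⟨a, mem_univ a, ha⟩
  · intro hp
    obtain ⟨a, -, rfl⟩ := mem_image.1 hp
    exact P.part_mem.2 (mem_univ a)

lemma ofSetoid_ker_part (P : Finpartition (univ : Finset α)) :
    ofS (Setoid.ker P.part) = P := by
  apply Finpartition.ext
  rw [parts_eq_image_part, parts_eq_image_part P]
  apply Finset.image_congr
  intro a _
  ext b
  rw [mem_part_ofS_iff_rel]
  rw [P.mem_part_iff_part_eq_part (mem_univ b) (mem_univ a), Setoid.ker_def]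
  exact eq_comm

lemma ker_part_ofSetoid (s : Setoid α) :
    Setoid.ker (ofS s).part = s := by
  apply Setoid.ext
  intro a b
  constructor
  · intro h
    have hb : b ∈ (ofS s).part b :=
      Finpartition.mem_part _ (mem_univ b)
    rw [Setoid.ker_def] at h
    rw [← mem_part_ofS_iff_rel (a := a) (b := b)]
    rw [h]; exact hb
  · intro h
    have hb : b ∈ (ofS s).part a :=
      (mem_part_ofS_iff_rel).2 h
    have := Finpartition.part_eq_of_mem _ ((Finpartition.part_mem (ofS s)).2 (mem_univ a)) hb
    exact this.symm

noncomputable def fpEquivSetoid : Finpartition (univ : Finset α) ≃ Setoid α where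
  toFun P := Setoid.ker P.part
  invFun s := ofS s
  left_inv P := ofSetoid_ker_part P
  right_inv s := ker_part_ofSetoid s

lemma card_parts_eq_card_quotient (P : Finpartition (univ : Finset α)) :
    P.parts.card = Nat.card (Quotient (Setoid.ker P.part)) := by
  rw [Nat.card_congr (Setoid.quotientKerEquivRange P.part)]
  rw [Nat.card_coe_set_eq]
  have : Set.range P.part = ↑(univ.image P.part) := by
    rw [coe_image, coe_univ, Set.image_univ]
  rw [this, Set.ncard_coe_finset, ← parts_eq_image_part]

end E1
section E1b
open Finset
variable {α : Type*} [Fintype α] [DecidableEq α]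

lemma nat_card_finpartition_eq (n : ℕ) :
    Nat.card (Finpartition (Finset.univ : Finset (Fin n))) = Nat.card (Setoid (Fin n)) :=
  Nat.card_congr fpEquivSetoid

lemma nat_card_stirling (r k : ℕ) :
    Nat.card {P : Finpartition (Finset.univ : Finset (Fin r)) // P.parts.card = k} =
      Nat.card {s : Setoid (Fin r) // Nat.card (Quotient s) = k} :=
  Nat.card_congr (Equiv.subtypeEquiv fpEquivSetoid (fun P => by
    rw [card_parts_eq_card_quotient]; rfl))

/-- transfer setoids along an equivalence -/
def setoidCongr {α β : Type*} (e : α ≃ β) : Setoid α ≃ Setoid β where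
  toFun s := s.comap e.symm
  invFun t := t.comap e
  left_inv s := Setoid.ext (fun a b => by simp [Setoid.comap_rel])
  right_inv t := Setoid.ext (fun a b => by simp [Setoid.comap_rel])

end E1b
section Core
open Finset Function Sum

variable {α β : Type*} [Fintype α] [Fintype β]

/-- The data of: a setoid on `α`, a setoid on `β`, a set of "propagating" classes of the first,
and an injection of those into the classes of the second. -/
structure SumData (α β : Type*) where
  s : Setoid α
  t : Setoid β
  D : Finset (Quotient s)
  f : {x // x ∈ D} ↪ Quotient t

namespace SumData

variable {α β : Type*}

/-- The relation on `α ⊕ β` induced by the data. -/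
def Rel (d : SumData α β) : α ⊕ β → α ⊕ β → Prop
  | inl a, inl a' => d.s a a'
  | inr b, inr b' => d.t b b'
  | inl a, inr b => ∃ h : Quotient.mk d.s a ∈ d.D, d.f ⟨Quotient.mk d.s a, h⟩ = Quotient.mk d.t b
  | inr b, inl a => ∃ h : Quotient.mk d.s a ∈ d.D, d.f ⟨Quotient.mk d.s a, h⟩ = Quotient.mk d.t b

lemma rel_iseqv (d : SumData α β) : Equivalence d.Rel := by
  constructor
  · rintro (a | b)
    · exact d.s.refl a
    · exact d.t.refl b
  · rintro (a | b) (a' | b') h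
    · exact d.s.symm h
    · exact h
    · exact h
    · exact d.t.symm h
  · rintro (a | b) (a' | b') (a'' | b'') h₁ h₂
    · exact d.s.trans h₁ h₂
    · -- inl a, inl a', inr b''
      obtain ⟨h, hf⟩ := h₂
      have : Quotient.mk d.s a = Quotient.mk d.s a' := Quotient.sound h₁
      exact ⟨this ▸ h, by rw [show (⟨Quotient.mk d.s a, this ▸ h⟩ :
        {x // x ∈ d.D}) = ⟨Quotient.mk d.s a', h⟩ from Subtype.ext this, hf]⟩
    · -- inl a, inr b', inl a''
      obtain ⟨h₁m, h₁f⟩ := h₁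
      obtain ⟨h₂m, h₂f⟩ := h₂
      have : (⟨Quotient.mk d.s a, h₁m⟩ : {x // x ∈ d.D}) = ⟨Quotient.mk d.s a'', h₂m⟩ :=
        d.f.injective (h₁f.trans h₂f.symm)
      exact Quotient.exact (congrArg Subtype.val this)
    · -- inl a, inr b', inr b''
      obtain ⟨h₁m, h₁f⟩ := h₁
      exact ⟨h₁m, h₁f.trans (Quotient.sound h₂)⟩
    · -- inr b, inl a', inl a''
      obtain ⟨h₁m, h₁f⟩ := h₁
      have he : Quotient.mk d.s a' = Quotient.mk d.s a'' := Quotient.sound h₂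
      exact ⟨he ▸ h₁m, by rw [show (⟨Quotient.mk d.s a'', he ▸ h₁m⟩ :
        {x // x ∈ d.D}) = ⟨Quotient.mk d.s a', h₁m⟩ from (Subtype.ext he).symm, h₁f]⟩
    · -- inr b, inl a', inr b''
      obtain ⟨h₁m, h₁f⟩ := h₁
      obtain ⟨h₂m, h₂f⟩ := h₂
      exact Quotient.exact (h₁f.symm.trans h₂f)
    · -- inr b, inr b', inl a''
      obtain ⟨h₂m, h₂f⟩ := h₂
      exact ⟨h₂m, h₂f.trans (Quotient.sound (d.t.symm h₁))⟩
    · exact d.t.trans h₁ h₂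

/-- The setoid on `α ⊕ β` induced by the data. -/
def toSetoid (d : SumData α β) : Setoid (α ⊕ β) := ⟨d.Rel, d.rel_iseqv⟩

lemma toSetoid_inl_inl (d : SumData α β) (a a' : α) :
    d.toSetoid (inl a) (inl a') ↔ d.s a a' := Iff.rfl

lemma toSetoid_inr_inr (d : SumData α β) (b b' : β) :
    d.toSetoid (inr b) (inr b') ↔ d.t b b' := Iff.rfl

lemma toSetoid_inl_inr (d : SumData α β) (a : α) (b : β) :
    d.toSetoid (inl a) (inr b) ↔
      ∃ h : Quotient.mk d.s a ∈ d.D, d.f ⟨Quotient.mk d.s a, h⟩ = Quotient.mk d.t b := Iff.rfl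

lemma toSetoid_injective : Function.Injective (toSetoid : SumData α β → Setoid (α ⊕ β)) := by
  rintro ⟨s₁, t₁, D₁, f₁⟩ ⟨s₂, t₂, D₂, f₂⟩ h
  have hrel : ∀ x y : α ⊕ β, (toSetoid ⟨s₁, t₁, D₁, f₁⟩) x y ↔ (toSetoid ⟨s₂, t₂, D₂, f₂⟩) x y := by
    rw [h]; exact fun x y => Iff.rfl
  have hs : s₁ = s₂ := Setoid.ext (fun a a' => hrel (inl a) (inl a'))
  subst hs
  have ht : t₁ = t₂ := Setoid.ext (fun b b' => hrel (inr b) (inr b'))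
  subst ht
  have hD : D₁ = D₂ := by
    ext c
    induction c using Quotient.ind with
    | _ a =>
      constructor
      · intro hc
        obtain ⟨h', -⟩ := (hrel (inl a) (inr (f₁ ⟨Quotient.mk s₁ a, hc⟩).out)).1
          ⟨hc, (Quotient.out_eq _).symm⟩
        exact h'
      · intro hc
        obtain ⟨h', -⟩ := (hrel (inl a) (inr (f₂ ⟨Quotient.mk s₁ a, hc⟩).out)).2
          ⟨hc, (Quotient.out_eq _).symm⟩
        exact h'
  subst hD
  have hf : f₁ = f₂ := by
    apply Function.Embedding.ext
    rintro ⟨c, hc⟩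
    induction c using Quotient.ind with
    | _ a =>
      obtain ⟨h', hval⟩ := (hrel (inl a) (inr (f₁ ⟨Quotient.mk s₁ a, hc⟩).out)).1
        ⟨hc, (Quotient.out_eq _).symm⟩
      rw [Quotient.out_eq] at hval
      exact hval.symm
  subst hf
  rfl

lemma toSetoid_surjective [Fintype α] [Fintype β] :
    Function.Surjective (toSetoid : SumData α β → Setoid (α ⊕ β)) := by
  classical
  intro u
  set s : Setoid α := u.comap inl with hs
  set t : Setoid β := u.comap inr with ht
  letI : DecidableRel s.r := Classical.decRel _
  letI : Fintype (Quotient s) := Quotient.fintype s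
  set D : Finset (Quotient s) :=
    Finset.univ.filter (fun c => ∃ b : β, u (inl c.out) (inr b)) with hD
  have hDspec : ∀ c : Quotient s, c ∈ D ↔ ∃ b : β, u (inl c.out) (inr b) := by
    intro c; rw [hD]; simp
  -- the embedding
  have hchoice : ∀ x : {x // x ∈ D}, ∃ b : β, u (inl x.1.out) (inr b) :=
    fun x => (hDspec x.1).1 x.2
  set f0 : {x // x ∈ D} → Quotient t := fun x => Quotient.mk t (hchoice x).choose with hf0
  have hf0spec : ∀ x : {x // x ∈ D}, u (inl x.1.out) (inr (hchoice x).choose) :=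
    fun x => (hchoice x).choose_spec
  have hinj : Function.Injective f0 := by
    rintro ⟨c₁, h₁⟩ ⟨c₂, h₂⟩ hf
    have htb : t (hchoice ⟨c₁, h₁⟩).choose (hchoice ⟨c₂, h₂⟩).choose := Quotient.exact hf
    have : u (inl c₁.out) (inl c₂.out) :=
      u.trans (hf0spec ⟨c₁, h₁⟩) (u.trans htb (u.symm (hf0spec ⟨c₂, h₂⟩)))
    have : s c₁.out c₂.out := this
    apply Subtype.ext
    calc c₁ = Quotient.mk s c₁.out := (Quotient.out_eq _).symm
    _ = Quotient.mk s c₂.out := Quotient.sound this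
    _ = c₂ := Quotient.out_eq _
  refine ⟨⟨s, t, D, ⟨f0, hinj⟩⟩, ?_⟩
  -- key facts
  have hout : ∀ a : α, u (inl a) (inl (Quotient.mk s a).out) :=
    fun a => u.symm (Quotient.mk_out (s := s) a)
  apply Setoid.ext
  rintro (a | b) (a' | b')
  · exact Iff.rfl
  · -- inl a, inr b'
    rw [toSetoid_inl_inr]
    constructor
    · rintro ⟨hm, hval⟩
      have h1 : u (inl (Quotient.mk s a).out) (inr (hchoice ⟨Quotient.mk s a, hm⟩).choose) :=
        hf0spec ⟨Quotient.mk s a, hm⟩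
      have h2 : t (hchoice ⟨Quotient.mk s a, hm⟩).choose b' := Quotient.exact hval
      exact u.trans (hout a) (u.trans h1 h2)
    · intro hu
      have hm : Quotient.mk s a ∈ D := by
        rw [hDspec]
        exact ⟨b', u.trans (u.symm (hout a)) hu⟩
      refine ⟨hm, ?_⟩
      apply Quotient.sound
      show t _ b'
      exact u.trans (u.symm (hf0spec ⟨Quotient.mk s a, hm⟩)) (u.trans (u.symm (hout a)) hu)
  · -- inr b, inl a'
    show (∃ h : Quotient.mk s a' ∈ D, _) ↔ _
    constructor
    · rintro ⟨hm, hval⟩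
      have h1 : u (inl (Quotient.mk s a').out) (inr (hchoice ⟨Quotient.mk s a', hm⟩).choose) :=
        hf0spec ⟨Quotient.mk s a', hm⟩
      have h2 : t (hchoice ⟨Quotient.mk s a', hm⟩).choose b := Quotient.exact hval
      exact u.symm (u.trans (hout a') (u.trans h1 h2))
    · intro hu
      have hu' : u (inl a') (inr b) := u.symm hu
      have hm : Quotient.mk s a' ∈ D := by
        rw [hDspec]
        exact ⟨b, u.trans (u.symm (hout a')) hu'⟩
      refine ⟨hm, ?_⟩
      apply Quotient.sound
      show t _ b
      exact u.trans (u.symm (hf0spec ⟨Quotient.mk s a', hm⟩)) (u.trans (u.symm (hout a')) hu')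
  · exact Iff.rfl

end SumData

end Core
section Count
open Finset Function Sum

lemma nat_card_sigma' {ι : Type*} [Fintype ι] (F : ι → Type*) [∀ i, Finite (F i)] :
    Nat.card (Σ i, F i) = ∑ i, Nat.card (F i) := by
  letI : ∀ i, Fintype (F i) := fun i => Fintype.ofFinite _
  simp [Nat.card_eq_fintype_card]

def sumDataEquiv (α β : Type*) :
    SumData α β ≃ Σ (s : Setoid α) (t : Setoid β) (D : Finset (Quotient s)),
      ({x // x ∈ D} ↪ Quotient t) where
  toFun d := ⟨d.s, d.t, d.D, d.f⟩
  invFun x := ⟨x.1, x.2.1, x.2.2.1, x.2.2.2⟩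
  left_inv d := rfl
  right_inv x := rfl

lemma sum_fiber {ι : Type*} [Fintype ι] (c : ι → ℕ) (r : ℕ) (hc : ∀ i, c i ≤ r) (g : ℕ → ℕ) :
    ∑ i, g (c i) = ∑ k ∈ range (r + 1), (Nat.card {i // c i = k}) * g k := by
  classical
  rw [← Finset.sum_fiberwise_of_maps_to (g := c) (t := range (r + 1))
    (fun i _ => mem_range.2 (Nat.lt_succ_of_le (hc i))) (fun i => g (c i))]
  apply sum_congr rfl
  intro k _
  rw [Finset.sum_congr rfl (fun i hi => by rw [(mem_filter.1 hi).2]), sum_const, smul_eq_mul]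
  congr 1
  rw [Nat.card_eq_fintype_card, Fintype.card_subtype]

lemma key_count (r : ℕ) :
    Nat.card (Setoid (Fin r ⊕ Fin r)) =
      ∑ l ∈ Finset.range (r + 1),
        Nat.factorial l *
          (∑ k ∈ Finset.Icc l r,
            (Nat.card {s : Setoid (Fin r) // Nat.card (Quotient s) = k}) * Nat.choose k l) ^ 2 := by
  classical
  letI : Fintype (Setoid (Fin r)) := Fintype.ofFinite _
  rw [← Nat.card_eq_of_bijective _ ⟨SumData.toSetoid_injective, SumData.toSetoid_surjective⟩]
  rw [Nat.card_congr (sumDataEquiv (Fin r) (Fin r))]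
  rw [nat_card_sigma']
  -- abbreviation
  set ncl : Setoid (Fin r) → ℕ := fun s => Nat.card (Quotient s) with hncl
  have hle : ∀ s : Setoid (Fin r), ncl s ≤ r := by
    intro s
    rw [hncl]
    simp only []
    rw [Nat.card_eq_fintype_card]
    exact le_trans (Fintype.card_quotient_le s) (by simp)
  have step1 : ∀ s : Setoid (Fin r),
      Nat.card (Σ (t : Setoid (Fin r)) (D : Finset (Quotient s)), ({x // x ∈ D} ↪ Quotient t)) =
      ∑ t : Setoid (Fin r), ∑ l ∈ range (r + 1),
        Nat.choose (ncl s) l * (ncl t).descFactorial l := by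
    intro s
    rw [nat_card_sigma']
    apply sum_congr rfl
    intro t _
    rw [nat_card_sigma']
    have hemb : ∀ D : Finset (Quotient s),
        Nat.card ({x // x ∈ D} ↪ Quotient t) = (ncl t).descFactorial D.card := by
      intro D
      rw [Nat.card_eq_fintype_card, Fintype.card_embedding_eq, Fintype.card_coe, hncl]
      simp only []
      rw [Nat.card_eq_fintype_card]
    calc ∑ D : Finset (Quotient s), Nat.card ({x // x ∈ D} ↪ Quotient t)
        = ∑ D ∈ Finset.univ.powerset, (ncl t).descFactorial D.card := by
          rw [powerset_univ]; exact sum_congr rfl (fun D _ => hemb D)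
      _ = ∑ j ∈ range (#(Finset.univ : Finset (Quotient s)) + 1),
            ∑ D ∈ powersetCard j (Finset.univ : Finset (Quotient s)),
              (ncl t).descFactorial D.card := sum_powerset _ _
      _ = ∑ j ∈ range (ncl s + 1), Nat.choose (ncl s) j * (ncl t).descFactorial j := by
          have hcard : #(Finset.univ : Finset (Quotient s)) = ncl s := by
            rw [card_univ, hncl]; simp [Nat.card_eq_fintype_card]
          rw [hcard]
          apply sum_congr rfl
          intro j _
          rw [← hcard]
          rw [Finset.sum_congr rfl
            (fun D hD => by rw [(Finset.mem_powersetCard.1 hD).2]), sum_const, smul_eq_mul,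
            card_powersetCard, hcard]
      _ = ∑ j ∈ range (r + 1), Nat.choose (ncl s) j * (ncl t).descFactorial j := by
          apply Finset.sum_subset
          · exact range_subset_range.2 (Nat.succ_le_succ (hle s))
          · intro j _ hj
            rw [mem_range, not_lt] at hj
            rw [Nat.choose_eq_zero_of_lt (Nat.lt_of_succ_le hj), zero_mul]
  rw [Finset.sum_congr rfl (fun s _ => step1 s)]
  -- swap sums
  calc ∑ s : Setoid (Fin r), ∑ t : Setoid (Fin r), ∑ l ∈ range (r + 1),
        Nat.choose (ncl s) l * (ncl t).descFactorial l
      = ∑ s : Setoid (Fin r), ∑ l ∈ range (r + 1), ∑ t : Setoid (Fin r),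
        Nat.choose (ncl s) l * (ncl t).descFactorial l :=
        sum_congr rfl (fun s _ => Finset.sum_comm)
    _ = ∑ l ∈ range (r + 1), ∑ s : Setoid (Fin r), ∑ t : Setoid (Fin r),
        Nat.choose (ncl s) l * (ncl t).descFactorial l := Finset.sum_comm
    _ = ∑ l ∈ range (r + 1),
        (∑ s : Setoid (Fin r), Nat.choose (ncl s) l) *
        (∑ t : Setoid (Fin r), (ncl t).descFactorial l) := by
        apply sum_congr rfl
        intro l _
        rw [Finset.sum_mul_sum]
    _ = ∑ l ∈ Finset.range (r + 1),
        Nat.factorial l *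
          (∑ k ∈ Finset.Icc l r,
            (Nat.card {s : Setoid (Fin r) // Nat.card (Quotient s) = k}) * Nat.choose k l) ^ 2 := by
        apply sum_congr rfl
        intro l hl
        have hlr : l ≤ r := Nat.lt_succ_iff.1 (mem_range.1 hl)
        rw [sum_fiber ncl r hle (fun m => Nat.choose m l),
            sum_fiber ncl r hle (fun m => m.descFactorial l)]
        have hIcc : ∀ g : ℕ → ℕ,
            ∑ k ∈ range (r + 1), (Nat.card {s : Setoid (Fin r) // ncl s = k}) * (Nat.choose k l * g k) =
            ∑ k ∈ Finset.Icc l r, (Nat.card {s : Setoid (Fin r) // ncl s = k}) * (Nat.choose k l * g k) := by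
          intro g
          refine (Finset.sum_subset ?_ ?_).symm
          · intro k hk
            rw [Finset.mem_Icc] at hk
            exact mem_range.2 (Nat.lt_succ_of_le hk.2)
          · intro k hk hk'
            rw [mem_range, Nat.lt_succ_iff] at hk
            rw [Finset.mem_Icc, not_and] at hk'
            have : k < l := by
              by_contra hkl
              exact hk' (le_of_not_gt hkl) hk
            rw [Nat.choose_eq_zero_of_lt this, zero_mul, mul_zero]
        have e1 : ∑ k ∈ range (r + 1), (Nat.card {s : Setoid (Fin r) // ncl s = k}) * Nat.choose k l =
            ∑ k ∈ Finset.Icc l r, (Nat.card {s : Setoid (Fin r) // ncl s = k}) * Nat.choose k l := by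
          have := hIcc (fun _ => 1)
          simpa using this
        have e2 : ∑ k ∈ range (r + 1), (Nat.card {s : Setoid (Fin r) // ncl s = k}) * (Nat.descFactorial k l) =
            ∑ k ∈ Finset.Icc l r, (Nat.card {s : Setoid (Fin r) // ncl s = k}) * (Nat.descFactorial k l) := by
          have := hIcc (fun k => Nat.factorial l * Nat.choose k l)  -- unused shortcut
          clear this
          refine (Finset.sum_subset ?_ ?_).symm
          · intro k hk
            rw [Finset.mem_Icc] at hk
            exact mem_range.2 (Nat.lt_succ_of_le hk.2)
          · intro k hk hk'
            rw [mem_range, Nat.lt_succ_iff] at hk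
            rw [Finset.mem_Icc, not_and] at hk'
            have hkl : k < l := by
              by_contra hkl
              exact hk' (le_of_not_gt hkl) hk
            rw [Nat.descFactorial_eq_zero_iff_lt.2 hkl, mul_zero]
        rw [e1, e2]
        have e3 : ∑ k ∈ Finset.Icc l r, (Nat.card {s : Setoid (Fin r) // ncl s = k}) * (Nat.descFactorial k l) =
            Nat.factorial l * ∑ k ∈ Finset.Icc l r, (Nat.card {s : Setoid (Fin r) // ncl s = k}) * Nat.choose k l := by
          rw [Finset.mul_sum]
          apply sum_congr rfl
          intro k _
          rw [Nat.descFactorial_eq_factorial_mul_choose]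
          ring
        rw [e3, hncl]
        ring

end Count

/-- The Bell number: the number of set partitions of an `n`-element set. -/
noncomputable def bell (n : ℕ) : ℕ :=
  Nat.card (Finpartition (Finset.univ : Finset (Fin n)))

/-- The Stirling number of the second kind: the number of set partitions of an
`r`-element set into exactly `k` blocks. -/
noncomputable def stirling (r k : ℕ) : ℕ :=
  Nat.card {P : Finpartition (Finset.univ : Finset (Fin r)) // P.parts.card = k}

/-- For `r ≥ 1`, `B(2r) = Σ_{l=0}^{r} l! · (Σ_{k=l}^{r} S(r,k) · C(k,l))²`. -/
theorem bell_two_mul_eq_sum_layers (r : ℕ) (hr : 1 ≤ r) :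
    bell (2 * r) =
      ∑ l ∈ Finset.range (r + 1),
        Nat.factorial l *
          (∑ k ∈ Finset.Icc l r, stirling r k * Nat.choose k l) ^ 2 := by
  have e : Fin r ⊕ Fin r ≃ Fin (2 * r) := finSumFinEquiv.trans (finCongr (two_mul r).symm)
  rw [bell, nat_card_finpartition_eq, ← Nat.card_congr (setoidCongr e), key_count r]
  apply Finset.sum_congr rfl
  intro l _
  congr 1
  congr 1
  apply Finset.sum_congr rfl
  intro k _
  rw [stirling, nat_card_stirling]
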